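/- Let k ≥ 3 and m ≥ 2k be integers, and let D′ be the digraph constructed from G⃗_{2m,2k} as follows: for each ordered partition (A,B) of {1,…,2m} with |A| = |B| = m, add two new vertices s_{(A,B)} and t_{(A,B)}; add an arc from every vertex (a_1,…,a_k,b_1,…,b_k) of G⃗_{2m,2k} with a_1,…,a_k ∈ A and b_1,…,b_k ∈ B to s_{(A,B)}, and add an arc from t_{(A,B)} to every such vertex; add a directed path p_1 → p_2 → … → p_k on k new vertices; finally add an arc from every vertex s_{(A,B)} to p_1 and an arc from p_k to every vertex t_{(A,B)}. Then D′ does not contain any digraph in 𝒞_k ∪ 𝒞′_k as a subdigraph. -/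

import Mathlib

/-- A digraph `D` (given by its arc relation `E`) contains the digraph given by the
arc relation `F` as a subdigraph: there is an injective map of the vertices preserving arcs. -/
def ContainsDigraph {V W : Type*} (E : V → V → Prop) (F : W → W → Prop) : Prop :=
  ∃ f : W → V, Function.Injective f ∧ ∀ u v : W, F u v → E (f u) (f v)

/-- The orientation of the `k`-cycle determined by `o : ZMod k → Bool`:
the edge `i` of the cycle joins `i` and `i + 1`, and is oriented `i → i + 1`
when `o i = true`, and `i + 1 → i` when `o i = false`. -/
def cycleOrient {k : ℕ} (o : ZMod k → Bool) : ZMod k → ZMod k → Prop :=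
  fun u v => (o u = true ∧ v = u + 1) ∨ (o v = false ∧ u = v + 1)

/-- The arc obtained by orienting the edge `i` of the `k`-cycle according to `o`.
Injectivity of `cycleArc o` says that distinct edges yield distinct arcs, i.e. the
orientation is a genuine digraph without parallel arcs (this is automatic for `k ≥ 3`). -/
def cycleArc {k : ℕ} (o : ZMod k → Bool) (i : ZMod k) : ZMod k × ZMod k :=
  if o i then (i, i + 1) else (i + 1, i)

open Classical in
/-- The number of blocks of the orientation of the `k`-cycle given by `o`:
a directed cycle has a single block, and otherwise the blocks (maximal directed
subpaths) correspond bijectively to the indices `i` at which the orientation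
changes between the consecutive edges `i` and `i + 1`. -/
noncomputable def blockCount {k : ℕ} (o : ZMod k → Bool) : ℕ :=
  if ∀ i, o i = o 0 then 1 else {i : ZMod k | o i ≠ o (i + 1)}.ncard

/-- The orientation of the `k`-cycle given by `o` has a block of length one, i.e.
some edge `i + 1` is a maximal directed subpath on its own. -/
def hasShortBlock {k : ℕ} (o : ZMod k → Bool) : Prop :=
  ∃ i : ZMod k, o i ≠ o (i + 1) ∧ o (i + 1) ≠ o (i + 2)

/-- The digraph given by the arc relation `E` contains, as a subdigraph, a member of
`𝒞_k ∪ 𝒞'_k`: i.e. an orientation of a cycle of length `ℓ` with `2 ≤ ℓ ≤ k` (a genuine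
digraph, whence the injectivity of `cycleArc o`) which either is a directed cycle
(a single block) or consists of exactly two blocks, one of which has length one. -/
def ContainsFamilyCk (k : ℕ) {V : Type*} (E : V → V → Prop) : Prop :=
  ∃ (ℓ : ℕ) (o : ZMod ℓ → Bool), 2 ≤ ℓ ∧ ℓ ≤ k ∧
    Function.Injective (cycleArc o) ∧
    (blockCount o = 1 ∨ (blockCount o = 2 ∧ hasShortBlock o)) ∧
    ContainsDigraph E (cycleOrient o)

/-- The vertices of the digraph `G⃗_{2m,2k}`: `2k`-tuples of pairwise distinct elements
of a `2m`-element set. -/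
def ShiftVert (m k : ℕ) : Type := {a : Fin (2 * k) → Fin (2 * m) // Function.Injective a}

/-- The arc relation of `G⃗_{2m,2k}`: there is an arc from `a` to `b` iff
`a (i + 1) = b i` for all `0 ≤ i < 2k - 1`. -/
def ShiftRel (m k : ℕ) : ShiftVert m k → ShiftVert m k → Prop :=
  fun a b => ∀ i j : Fin (2 * k), (j : ℕ) = (i : ℕ) + 1 → a.1 j = b.1 i

/-- Ordered partitions `(A, B)` of `{1, …, 2m}` with `|A| = |B| = m`, recorded by the
set `A` (so `B` is the complement of `A`). -/
def HalfPart (m : ℕ) : Type := {A : Finset (Fin (2 * m)) // A.card = m}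

/-- The tuple `a = (a₁, …, a_k, b₁, …, b_k)` has its first `k` entries in `A` and its
last `k` entries in `B` (the complement of `A`). -/
def SplitsAB (m k : ℕ) (A : Finset (Fin (2 * m))) (a : Fin (2 * k) → Fin (2 * m)) : Prop :=
  ∀ i : Fin (2 * k), ((i : ℕ) < k → a i ∈ A) ∧ (k ≤ (i : ℕ) → a i ∉ A)

/-- The digraph `D'` obtained from `G⃗_{2m,2k}` by adding, for each ordered partition
`(A, B)` of `{1, …, 2m}` into halves, a sink vertex `s_{(A,B)}` (second summand) and a
source vertex `t_{(A,B)}` (third summand), together with a directed path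
`p₁ → ⋯ → p_k` (fourth summand): every vertex `(a₁,…,a_k,b₁,…,b_k)` with all `aᵢ ∈ A`
and all `bᵢ ∈ B` sends an arc to `s_{(A,B)}` and receives an arc from `t_{(A,B)}`;
every `s_{(A,B)}` sends an arc to `p₁`, and `p_k` sends an arc to every `t_{(A,B)}`. -/
def AugmentedRel (m k : ℕ) :
    (ShiftVert m k ⊕ (HalfPart m ⊕ (HalfPart m ⊕ Fin k))) →
    (ShiftVert m k ⊕ (HalfPart m ⊕ (HalfPart m ⊕ Fin k))) → Prop
  | Sum.inl a, Sum.inl b => ShiftRel m k a b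
  | Sum.inl a, Sum.inr (Sum.inl A) => SplitsAB m k A.1 a.1
  | Sum.inr (Sum.inr (Sum.inl A)), Sum.inl a => SplitsAB m k A.1 a.1
  | Sum.inr (Sum.inl _), Sum.inr (Sum.inr (Sum.inr p)) => (p : ℕ) = 0
  | Sum.inr (Sum.inr (Sum.inr p)), Sum.inr (Sum.inr (Sum.inr q)) => (q : ℕ) = (p : ℕ) + 1
  | Sum.inr (Sum.inr (Sum.inr p)), Sum.inr (Sum.inr (Sum.inl _)) => (p : ℕ) = k - 1
  | _, _ => False
section Helpers
variable {m k : ℕ}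

local notation "Vx" => (ShiftVert m k ⊕ (HalfPart m ⊕ (HalfPart m ⊕ Fin k)))
local notation "inS" A => (Sum.inr (Sum.inl A) : ShiftVert m k ⊕ (HalfPart m ⊕ (HalfPart m ⊕ Fin k)))
local notation "inT" A => (Sum.inr (Sum.inr (Sum.inl A)) : ShiftVert m k ⊕ (HalfPart m ⊕ (HalfPart m ⊕ Fin k)))
local notation "inP" p => (Sum.inr (Sum.inr (Sum.inr p)) : ShiftVert m k ⊕ (HalfPart m ⊕ (HalfPart m ⊕ Fin k)))

lemma succ_s {A : HalfPart m} {v : Vx} (h : AugmentedRel m k (inS A) v) :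
    ∃ p : Fin k, v = (inP p) ∧ (p : ℕ) = 0 := by
  rcases v with a | A' | A' | p
  · exact h.elim
  · exact h.elim
  · exact h.elim
  · exact ⟨p, rfl, h⟩

lemma succ_p {p : Fin k} {v : Vx} (hp : (p : ℕ) < k - 1)
    (h : AugmentedRel m k (inP p) v) : ∃ q : Fin k, v = (inP q) ∧ (q : ℕ) = (p : ℕ) + 1 := by
  rcases v with a | A' | A' | q
  · exact h.elim
  · exact h.elim
  · exact absurd (show (p : ℕ) = k - 1 from h) (by omega)
  · exact ⟨q, rfl, h⟩

lemma succ_t {A : HalfPart m} {v : Vx} (h : AugmentedRel m k (inT A) v) :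
    ∃ a : ShiftVert m k, v = Sum.inl a ∧ SplitsAB m k A.1 a.1 := by
  rcases v with a | A' | A' | q
  · exact ⟨a, rfl, h⟩
  · exact h.elim
  · exact h.elim
  · exact h.elim

lemma succ_shift {a : ShiftVert m k} {v : Vx} (h : AugmentedRel m k (Sum.inl a) v) :
    (∃ b, v = Sum.inl b ∧ ShiftRel m k a b) ∨ (∃ A : HalfPart m, v = (inS A) ∧ SplitsAB m k A.1 a.1) := by
  rcases v with b | A' | A' | q
  · exact Or.inl ⟨b, rfl, h⟩
  · exact Or.inr ⟨A', rfl, h⟩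
  · exact h.elim
  · exact h.elim

lemma pred_p0 {p : Fin k} (hp : (p : ℕ) = 0) {v : Vx} (h : AugmentedRel m k v (inP p)) :
    ∃ A : HalfPart m, v = (inS A) := by
  rcases v with a | A' | A' | q
  · exact h.elim
  · exact ⟨A', rfl⟩
  · exact h.elim
  · exact absurd (show (p : ℕ) = (q : ℕ) + 1 from h) (by omega)

lemma pred_p {p : Fin k} (hp : 0 < (p : ℕ)) {v : Vx} (h : AugmentedRel m k v (inP p)) :
    ∃ q : Fin k, v = (inP q) ∧ (q : ℕ) + 1 = (p : ℕ) := by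
  rcases v with a | A' | A' | q
  · exact h.elim
  · exact absurd (show (p : ℕ) = 0 from h) (by omega)
  · exact h.elim
  · exact ⟨q, rfl, h.symm⟩

lemma pred_t {A : HalfPart m} {v : Vx} (h : AugmentedRel m k v (inT A)) :
    ∃ p : Fin k, v = (inP p) ∧ (p : ℕ) = k - 1 := by
  rcases v with a | A' | A' | q
  · exact h.elim
  · exact h.elim
  · exact h.elim
  · exact ⟨q, rfl, h⟩

end Helpers

section Runs
variable {m k : ℕ}

local notation "Vx" => (ShiftVert m k ⊕ (HalfPart m ⊕ (HalfPart m ⊕ Fin k)))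

/-- forward run inside the path `p`. -/
lemma run_p {g : ℕ → Vx} {n : ℕ} (harc : ∀ j, j < n → AugmentedRel m k (g j) (g (j+1)))
    {q c : ℕ} (hc : c < k) (hq : g q = Sum.inr (Sum.inr (Sum.inr ⟨c, hc⟩))) :
    ∀ d, q + d ≤ n → ∀ (hcd : c + d < k), g (q + d) = Sum.inr (Sum.inr (Sum.inr ⟨c + d, hcd⟩)) := by
  intro d
  induction d with
  | zero => intro _ hcd; simpa using hq
  | succ d ih =>
    intro hqd hcd
    have hprev := ih (by omega) (by omega)
    have harc' := harc (q + d) (by omega)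
    rw [hprev] at harc'
    obtain ⟨q', hq', hval⟩ := succ_p (by simpa using (by omega : c + d < k - 1)) harc'
    have : q' = (⟨c + (d+1), hcd⟩ : Fin k) := by
      apply Fin.ext; simp at hval ⊢; omega
    rw [show q + (d+1) = (q+d) + 1 by ring, hq', this]

/-- a path of length at most `k-1` which starts at a shift vertex and does not end
at a `p`-vertex consists of shift vertices (except possibly its last vertex). -/
lemma path_shifts (hk : 3 ≤ k) {g : ℕ → Vx} {n : ℕ} (hnk : n ≤ k - 1)
    (harc : ∀ j, j < n → AugmentedRel m k (g j) (g (j+1)))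
    (h0 : ∃ a, g 0 = Sum.inl a) (hnp : ∀ p : Fin k, g n ≠ Sum.inr (Sum.inr (Sum.inr p))) :
    ∀ j, j < n → ∃ a, g j = Sum.inl a := by
  intro j
  induction j with
  | zero => intro _; exact h0
  | succ j ih =>
    intro hjn
    obtain ⟨a, ha⟩ := ih (by omega)
    have harc' := harc j (by omega)
    rw [ha] at harc'
    rcases succ_shift harc' with ⟨b, hb, _⟩ | ⟨A, hA, _⟩
    · exact ⟨b, hb⟩
    · -- g (j+1) is an s-vertex; then g (j+2) = p_0 and the path stays in p until n
      exfalso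
      have harc'' := harc (j+1) hjn
      rw [hA] at harc''
      obtain ⟨p, hp, hpval⟩ := succ_s harc''
      have hp0 : g ((j+2) + 0) = Sum.inr (Sum.inr (Sum.inr ⟨0, by omega⟩)) := by
        have : p = (⟨0, by omega⟩ : Fin k) := Fin.ext (by simpa using hpval)
        simpa [this] using hp
      have := run_p harc (by omega) hp0 (n - (j+2)) (by omega) (by omega)
      exact hnp _ (by rw [show n = (j+2) + (n - (j+2)) by omega]; rw [this])

/-- shift run. -/
lemma run_shift {g : ℕ → Vx} {n : ℕ}
    (harc : ∀ j, j < n → AugmentedRel m k (g j) (g (j+1)))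
    (hshift : ∀ j, j ≤ n → ∃ a, g j = Sum.inl a) :
    ∀ r, r ≤ n → ∀ (a0 ar : ShiftVert m k), g 0 = Sum.inl a0 → g r = Sum.inl ar →
      ∀ (i : ℕ) (hir : i + r < 2*k) (hi : i < 2*k), ar.1 ⟨i, hi⟩ = a0.1 ⟨i + r, hir⟩ := by
  intro r
  induction r with
  | zero =>
    intro _ a0 ar h0 hr i hir hi
    rw [h0] at hr
    cases Sum.inl.inj hr
    rfl
  | succ r ih =>
    intro hrn a0 ar h0 hr i hir hi
    obtain ⟨am, ham⟩ := hshift r (by omega)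
    have harc' := harc r (by omega)
    rw [ham, hr] at harc'
    have hstep : ar.1 ⟨i, hi⟩ = am.1 ⟨i+1, by omega⟩ :=
      ((show ShiftRel m k am ar from harc') ⟨i, by omega⟩ ⟨i+1, by omega⟩ rfl).symm
    rw [hstep, ih (by omega) a0 am h0 ham (i+1) (by omega) (by omega)]
    have hfin : (⟨i + 1 + r, by omega⟩ : Fin (2*k)) = ⟨i + (r + 1), hir⟩ := by
      apply Fin.ext
      show i + 1 + r = i + (r + 1)
      omega
    rw [hfin]

end Runs
section Cyc
variable {m k : ℕ}

local notation "Vx" => (ShiftVert m k ⊕ (HalfPart m ⊕ (HalfPart m ⊕ Fin k)))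

lemma no_dicycle (hk : 3 ≤ k) {ℓ : ℕ} (hℓ2 : 2 ≤ ℓ) (hℓk : ℓ ≤ k)
    (x : ZMod ℓ → Vx) (hinj : Function.Injective x)
    (harc : ∀ i, AugmentedRel m k (x i) (x (i+1))) : False := by
  haveI : NeZero ℓ := ⟨by omega⟩
  have harcg : ∀ (q : ZMod ℓ) (j : ℕ), j < k + 1 →
      AugmentedRel m k (x (q + (j:ℕ))) (x (q + ((j+1 : ℕ) : ZMod ℓ))) := by
    intro q j _
    have hc : ((j+1 : ℕ) : ZMod ℓ) = (j : ZMod ℓ) + 1 := by push_cast; ring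
    rw [hc, ← add_assoc]
    exact harc (q + (j:ℕ))
  -- the cycle contains no s-vertex
  have hnoS : ∀ (q : ZMod ℓ) (A : HalfPart m), x q ≠ Sum.inr (Sum.inl A) := by
    intro q A hq
    have harc0 := harc q
    rw [hq] at harc0
    obtain ⟨p, hp, hpv⟩ := succ_s harc0
    have hp' : x (q + ((1:ℕ) : ZMod ℓ)) = Sum.inr (Sum.inr (Sum.inr (⟨0, by omega⟩ : Fin k))) := by
      have hpe : p = ⟨0, by omega⟩ := Fin.ext (by simpa using hpv)
      rw [Nat.cast_one, ← hpe]
      exact hp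
    have hrun := run_p (g := fun j : ℕ => x (q + (j:ℕ))) (n := k + 1) (harcg q)
      (by omega) hp' (ℓ - 1) (by omega) (by omega)
    have h1 : 1 + (ℓ - 1) = ℓ := by omega
    rw [h1, ZMod.natCast_self, add_zero, hq] at hrun
    simp at hrun
  -- the cycle contains no p-vertex
  have hback : ∀ (c : ℕ) (hc : c < k) (q : ZMod ℓ),
      x q = Sum.inr (Sum.inr (Sum.inr (⟨c, hc⟩ : Fin k))) →
      x (q - (c:ℕ)) = Sum.inr (Sum.inr (Sum.inr (⟨0, by omega⟩ : Fin k))) := by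
    intro c
    induction c with
    | zero => intro hc q hq; simpa using hq
    | succ c ih =>
      intro hc q hq
      have harc0 := harc (q - 1)
      rw [sub_add_cancel, hq] at harc0
      obtain ⟨q', hq', hqv⟩ := pred_p (by simp) harc0
      have hq'e : q' = (⟨c, by omega⟩ : Fin k) := Fin.ext (by simp at hqv ⊢; omega)
      rw [hq'e] at hq'
      have := ih (by omega) (q - 1) hq'
      have hcast : q - ((c+1 : ℕ) : ZMod ℓ) = q - 1 - (c : ℕ) := by push_cast; ring
      rw [hcast]
      exact this
  have hnoP : ∀ (q : ZMod ℓ) (p : Fin k), x q ≠ Sum.inr (Sum.inr (Sum.inr p)) := by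
    intro q p hq
    have hq' : x q = Sum.inr (Sum.inr (Sum.inr (⟨(p:ℕ), p.isLt⟩ : Fin k))) := by
      rw [hq]
    have h0 := hback (p:ℕ) p.isLt q hq'
    have harc0 := harc (q - (p:ℕ) - 1)
    rw [sub_add_cancel, h0] at harc0
    obtain ⟨A, hA⟩ := pred_p0 (by simp) harc0
    exact hnoS _ A hA
  -- the cycle contains no t-vertex
  have hnoT : ∀ (q : ZMod ℓ) (A : HalfPart m), x q ≠ Sum.inr (Sum.inr (Sum.inl A)) := by
    intro q A hq
    have harc0 := harc (q - 1)
    rw [sub_add_cancel, hq] at harc0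
    obtain ⟨p, hp, _⟩ := pred_t harc0
    exact hnoP _ p hp
  -- so all cycle vertices are shift vertices
  have hall : ∀ q : ZMod ℓ, ∃ a, x q = Sum.inl a := by
    intro q
    rcases hx : x q with a | A | A | p
    · exact ⟨a, rfl⟩
    · exact absurd hx (hnoS q A)
    · exact absurd hx (hnoT q A)
    · exact absurd hx (hnoP q p)
  obtain ⟨a0, ha0⟩ := hall 0
  have harcn : ∀ j : ℕ, j < ℓ → AugmentedRel m k (x (j : ZMod ℓ)) (x ((j+1 : ℕ) : ZMod ℓ)) := by
    intro j _
    have hc : ((j+1 : ℕ) : ZMod ℓ) = (j : ZMod ℓ) + 1 := by push_cast; ring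
    rw [hc]
    exact harc _
  have h00 : x ((0:ℕ) : ZMod ℓ) = Sum.inl a0 := by rw [Nat.cast_zero]; exact ha0
  have hℓ0 : x ((ℓ:ℕ) : ZMod ℓ) = Sum.inl a0 := by rw [ZMod.natCast_self]; exact ha0
  have := run_shift (g := fun j : ℕ => x (j : ZMod ℓ)) (n := ℓ) harcn
    (fun j _ => hall _) ℓ le_rfl a0 a0 h00 hℓ0 0 (by omega) (by omega)
  have := a0.2 this
  simp [Fin.mk.injEq] at this
  omega

end Cyc
section Path
variable {m k : ℕ}

local notation "Vx" => (ShiftVert m k ⊕ (HalfPart m ⊕ (HalfPart m ⊕ Fin k)))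

lemma no_short_block (hk : 3 ≤ k) {n : ℕ} (hn2 : 2 ≤ n) (hnk : n ≤ k - 1)
    (g : ℕ → Vx)
    (hinj : ∀ j1 j2, j1 ≤ n → j2 ≤ n → g j1 = g j2 → j1 = j2)
    (harc : ∀ j, j < n → AugmentedRel m k (g j) (g (j+1)))
    (hchord : AugmentedRel m k (g 0) (g n)) : False := by
  rcases hu : g 0 with a | A | A | p <;> rcases hw : g n with b | B | B | q <;>
    rw [hu, hw] at hchord
  -- case shift → shift
  · have hchord' : ShiftRel m k a b := hchord
    have hshifts := path_shifts hk hnk harc ⟨a, hu⟩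
      (fun p hp => by rw [hw] at hp; simp at hp)
    have hshift' : ∀ j, j ≤ n → ∃ c, g j = Sum.inl c := by
      intro j hj
      rcases eq_or_lt_of_le hj with rfl | hj'
      · exact ⟨b, hw⟩
      · exact hshifts j hj'
    have hrun := run_shift harc hshift' n le_rfl a b hu hw 0 (by omega) (by omega)
    have hstep : a.1 ⟨1, by omega⟩ = b.1 ⟨0, by omega⟩ := hchord' ⟨0, by omega⟩ ⟨1, by omega⟩ rfl
    rw [hrun] at hstep
    have := a.2 hstep
    simp [Fin.mk.injEq] at this
    omega
  -- case shift → s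
  · have hchord' : SplitsAB m k B.1 a.1 := hchord
    have hshifts := path_shifts hk hnk harc ⟨a, hu⟩
      (fun p hp => by rw [hw] at hp; simp at hp)
    obtain ⟨c, hc⟩ := hshifts (n-1) (by omega)
    have harc' := harc (n-1) (by omega)
    rw [hc, show n-1+1 = n by omega, hw] at harc'
    have hsplit : SplitsAB m k B.1 c.1 := harc'
    have hshift' : ∀ j, j ≤ n - 1 → ∃ d, g j = Sum.inl d :=
      fun j hj => hshifts j (by omega)
    have hrun := run_shift (n := n-1) (fun j hj => harc j (by omega)) hshift'
      (n-1) le_rfl a c hu hc (k-1) (by omega) (by omega)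
    have h1 : c.1 ⟨k-1, by omega⟩ ∈ B.1 := (hsplit ⟨k-1, by omega⟩).1 (by show k - 1 < k; omega)
    have h2 : a.1 ⟨k-1 + (n-1), by omega⟩ ∉ B.1 :=
      (hchord' ⟨k-1 + (n-1), by omega⟩).2 (by show k ≤ k - 1 + (n - 1); omega)
    rw [hrun] at h1
    exact h2 h1
  · exact hchord.elim
  · exact hchord.elim
  · exact hchord.elim
  · exact hchord.elim
  · exact hchord.elim
  -- case s → p
  · have hchord' : (q : ℕ) = 0 := hchord
    have harc0 := harc 0 (by omega)
    rw [hu] at harc0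
    obtain ⟨p', hp', hpv⟩ := succ_s harc0
    have : p' = q := Fin.ext (by omega)
    rw [this, ← hw] at hp'
    have := hinj 1 n (by omega) le_rfl hp'
    omega
  -- case t → shift
  · have hchord' : SplitsAB m k A.1 b.1 := hchord
    have harc0 := harc 0 (by omega)
    rw [hu] at harc0
    obtain ⟨a1, ha1, hsplit1⟩ := succ_t harc0
    have harc' : ∀ j, j < n - 1 → AugmentedRel m k (g (1+j)) (g (1+(j+1))) := by
      intro j hj
      rw [show 1+(j+1) = (1+j)+1 by omega]
      exact harc (1+j) (by omega)
    have hshifts := path_shifts (g := fun j => g (1+j)) hk (by omega : n-1 ≤ k-1) harc'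
      ⟨a1, ha1⟩ (fun p hp => by
        have hp' : g (1+(n-1)) = Sum.inr (Sum.inr (Sum.inr p)) := hp
        rw [show 1+(n-1) = n by omega, hw] at hp'; simp at hp')
    have hshift' : ∀ j, j ≤ n - 1 → ∃ c, g (1+j) = Sum.inl c := by
      intro j hj
      rcases eq_or_lt_of_le hj with rfl | hj'
      · exact ⟨b, by show g (1+(n-1)) = _; rw [show 1+(n-1) = n by omega]; exact hw⟩
      · exact hshifts j hj'
    have hrun := run_shift (g := fun j => g (1+j)) (n := n-1) harc' hshift'
      (n-1) le_rfl a1 b ha1 (by show g (1+(n-1)) = _; rw [show 1+(n-1) = n by omega]; exact hw)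
      (k-1) (by omega) (by omega)
    have h1 : b.1 ⟨k-1, by omega⟩ ∈ A.1 := (hchord' ⟨k-1, by omega⟩).1 (by show k - 1 < k; omega)
    have h2 : a1.1 ⟨k-1 + (n-1), by omega⟩ ∉ A.1 :=
      (hsplit1 ⟨k-1 + (n-1), by omega⟩).2 (by show k ≤ k - 1 + (n - 1); omega)
    rw [hrun] at h1
    exact h2 h1
  · exact hchord.elim
  · exact hchord.elim
  · exact hchord.elim
  · exact hchord.elim
  · exact hchord.elim
  -- case p → t
  · have hchord' : (p : ℕ) = k - 1 := hchord
    have harc' := harc (n-1) (by omega)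
    rw [show n-1+1 = n by omega, hw] at harc'
    obtain ⟨p', hp', hpv⟩ := pred_t harc'
    have : p' = p := Fin.ext (by omega)
    rw [this, ← hu] at hp'
    have := hinj (n-1) 0 (by omega) (by omega) hp'
    omega
  -- case p → p
  · have hchord' : (q : ℕ) = (p : ℕ) + 1 := hchord
    have harc' := harc (n-1) (by omega)
    rw [show n-1+1 = n by omega, hw] at harc'
    obtain ⟨q', hq', hqv⟩ := pred_p (by omega) harc'
    have : q' = p := Fin.ext (by omega)
    rw [this, ← hu] at hq'
    have := hinj (n-1) 0 (by omega) (by omega) hq'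
    omega

end Path


/-- Claim 3.5. For `k ≥ 3` and `m ≥ 2k`, the augmented digraph `D'` contains no digraph
in `𝒞_k ∪ 𝒞'_k` as a subdigraph. -/
theorem augmented_digraph_family_free (k m : ℕ) (hk : 3 ≤ k) (hm : 2 * k ≤ m) :
    ¬ ContainsFamilyCk k (AugmentedRel m k) := by
  rintro ⟨ℓ, o, hℓ2, hℓk, hArcInj, hBlocks, f, hfinj, hf⟩
  haveI : NeZero ℓ := ⟨by omega⟩
  by_cases hconst : ∀ i, o i = o 0
  · -- a directed cycle
    cases hb : o 0 with
    | true =>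
      exact no_dicycle hk hℓ2 hℓk f hfinj
        (fun i => hf i (i+1) (Or.inl ⟨(hconst i).trans hb, rfl⟩))
    | false =>
      refine no_dicycle hk hℓ2 hℓk (fun i => f (-i))
        (fun i j hij => by have := hfinj hij; exact neg_injective this)
        (fun i => hf (-i) (-(i+1)) (Or.inr ⟨(hconst (-(i+1))).trans hb, by ring⟩))
  · -- an orientation with at least two blocks
    have hbc : blockCount o = {i : ZMod ℓ | o i ≠ o (i+1)}.ncard := by
      unfold blockCount; rw [if_neg hconst]
    have hzero : ∀ c : ℕ, 0 < c → c < ℓ → ((c : ZMod ℓ) ≠ 0) := by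
      intro c hc1 hc2 h
      have hd := (ZMod.natCast_eq_zero_iff c ℓ).mp h
      have := Nat.le_of_dvd hc1 hd
      omega
    have hne10 : (1 : ZMod ℓ) ≠ 0 := by
      have := hzero 1 (by omega) (by omega)
      simpa using this
    have hl1' : ((ℓ - 1 : ℕ) : ZMod ℓ) = -1 := by
      rw [Nat.cast_sub (by omega : 1 ≤ ℓ), ZMod.natCast_self, Nat.cast_one]; ring
    rcases hBlocks with h1 | ⟨h2, i, hi1, hi2⟩
    · -- one block yet not constant: impossible (changes come in pairs)
      rw [hbc] at h1
      obtain ⟨i0, hS⟩ := Set.ncard_eq_one.mp h1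
      have hmem : ∀ j : ZMod ℓ, o j ≠ o (j+1) → j = i0 := by
        intro j hj
        have : j ∈ {i : ZMod ℓ | o i ≠ o (i+1)} := hj
        rw [hS] at this
        exact this
      have hrun : ∀ c : ℕ, c ≤ ℓ - 1 → o (i0 + 1 + (c : ZMod ℓ)) = o (i0 + 1) := by
        intro c
        induction c with
        | zero => intro _; norm_num
        | succ c ih =>
          intro hc
          have hprev := ih (by omega)
          by_contra hne
          have hch : o (i0 + 1 + (c : ZMod ℓ)) ≠ o ((i0 + 1 + (c : ZMod ℓ)) + 1) := by
            rw [hprev]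
            intro h
            apply hne
            rw [h]
            congr 1
            push_cast; ring
          have heq := hmem _ hch
          have h0 : (1 + (c : ZMod ℓ)) = 0 := by
            have h' : i0 + (1 + (c : ZMod ℓ)) = i0 + 0 := by
              linear_combination heq
            exact add_left_cancel h'
          exact hzero (c+1) (by omega) (by omega) (by push_cast; rw [add_comm]; exact h0)
      have hfin := hrun (ℓ-1) le_rfl
      rw [hl1'] at hfin
      have hcast : i0 + 1 + (-1 : ZMod ℓ) = i0 := by ring
      rw [hcast] at hfin
      have hi0S : o i0 ≠ o (i0 + 1) := by
        have : i0 ∈ {i : ZMod ℓ | o i ≠ o (i+1)} := by rw [hS]; exact rfl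
        exact this
      exact hi0S hfin
    · -- two blocks, one of length one
      rw [hbc] at h2
      obtain ⟨α, β, hαβ, hS⟩ := Set.ncard_eq_two.mp h2
      have hii : (i : ZMod ℓ) ≠ i + 1 := by
        intro h
        apply hne10
        have h' : i + (1 : ZMod ℓ) = i + 0 := by rw [add_zero]; exact h.symm
        exact add_left_cancel h'
      -- the change set is exactly {i, i+1}
      have hiS : i ∈ ({α, β} : Set (ZMod ℓ)) := by rw [← hS]; exact hi1
      have hi1S : i + 1 ∈ ({α, β} : Set (ZMod ℓ)) := by
        rw [← hS]
        show o (i+1) ≠ o (i+1+1)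
        rw [show i+1+1 = i+2 by ring]
        exact hi2
      have hnc : ∀ j : ZMod ℓ, j ≠ i → j ≠ i + 1 → o j = o (j+1) := by
        intro j hj1 hj2
        by_contra hj
        have hjS : j ∈ ({α, β} : Set (ZMod ℓ)) := by rw [← hS]; exact hj
        simp only [Set.mem_insert_iff, Set.mem_singleton_iff] at hiS hi1S hjS
        rcases hiS with h|h <;> rcases hi1S with h'|h' <;> rcases hjS with h''|h'' <;>
          first
            | exact hii (h.trans h'.symm)
            | exact hj1 (h''.trans h.symm)
            | exact hj2 (h''.trans h'.symm)
      -- length at least 3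
      have hℓ3 : 3 ≤ ℓ := by
        by_contra hcon
        have hℓ2' : ℓ = 2 := by omega
        subst hℓ2'
        have h2z : (2 : ZMod 2) = 0 := by decide
        have hE : cycleArc o i = cycleArc o (i+1) := by
          have hstep : i + 1 + 1 = i := by linear_combination h2z
          rcases hoi : o i with _|_ <;> rcases hoi1 : o (i+1) with _|_
          · exact absurd (hoi.trans hoi1.symm) hi1
          · simp [cycleArc, hoi, hoi1, hstep]
          · simp [cycleArc, hoi, hoi1, hstep]
          · exact absurd (hoi.trans hoi1.symm) hi1
        exact hii (hArcInj hE)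
      -- o is constant off i+1
      have hmaj : ∀ c : ℕ, c ≤ ℓ - 2 → o (i + 2 + (c : ZMod ℓ)) = o (i + 2) := by
        intro c
        induction c with
        | zero => intro _; norm_num
        | succ c ih =>
          intro hc
          have hprev := ih (by omega)
          have hme : (i + 2 + (c : ZMod ℓ)) ≠ i := by
            intro h
            have h' : i + ((2 : ZMod ℓ) + c) = i + 0 := by linear_combination h
            have h0 := add_left_cancel h'
            exact hzero (c+2) (by omega) (by omega) (by push_cast; rw [add_comm]; exact h0)
          have hme1 : (i + 2 + (c : ZMod ℓ)) ≠ i + 1 := by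
            intro h
            have h' : (i+1) + ((1 : ZMod ℓ) + c) = (i+1) + 0 := by linear_combination h
            have h0 := add_left_cancel h'
            exact hzero (c+1) (by omega) (by omega) (by push_cast; rw [add_comm]; exact h0)
          have hstep := hnc _ hme hme1
          have hcst : (i + 2 + ((c+1 : ℕ) : ZMod ℓ)) = (i + 2 + (c : ZMod ℓ)) + 1 := by
            push_cast; ring
          rw [hcst, ← hstep]
          exact hprev
      have hoi2 : o i = o (i + 2) := by
        have hfin := hmaj (ℓ-2) le_rfl
        have hcast : i + 2 + ((ℓ-2 : ℕ) : ZMod ℓ) = i := by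
          rw [Nat.cast_sub (by omega : 2 ≤ ℓ), ZMod.natCast_self]
          push_cast; ring
        rwa [hcast] at hfin
      have hmaj' : ∀ j : ZMod ℓ, j ≠ i + 1 → o j = o (i + 2) := by
        intro j hj
        have hdlt : (j - (i+2)).val < ℓ := ZMod.val_lt _
        have hjd : j = i + 2 + (((j - (i+2)).val : ℕ) : ZMod ℓ) := by
          rw [ZMod.natCast_val, ZMod.cast_id]; ring
        have hdne : (j - (i+2)).val ≠ ℓ - 1 := by
          intro h
          apply hj
          rw [hjd, h, hl1']
          ring
        rw [hjd]
        exact hmaj _ (by omega)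
      have hoi1v : o (i+1) = !(o (i+2)) := by
        have h1 : o i ≠ o (i+1) := hi1
        rw [hoi2] at h1
        rcases hv : o (i+1) <;> rcases hv2 : o (i+2) <;> simp_all
      -- build the path-plus-chord configuration
      cases hc : o (i + 2) with
      | true =>
        refine no_short_block hk (n := ℓ - 1) (by omega) (by omega)
          (fun j : ℕ => f (i + 2 + (j : ZMod ℓ))) ?_ ?_ ?_
        · intro j1 j2 hj1 hj2 hg
          have hz := hfinj hg
          have hz' := add_left_cancel hz
          have := congrArg ZMod.val hz'
          rwa [ZMod.val_cast_of_lt (by omega), ZMod.val_cast_of_lt (by omega)] at this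
        · intro j hj
          show AugmentedRel m k (f (i + 2 + (j : ZMod ℓ))) (f (i + 2 + ((j+1 : ℕ) : ZMod ℓ)))
          have harg : (i + 2 + ((j+1 : ℕ) : ZMod ℓ)) = (i + 2 + (j : ZMod ℓ)) + 1 := by
            push_cast; ring
          rw [harg]
          refine hf _ _ (Or.inl ⟨?_, rfl⟩)
          rw [hmaj j (by omega)]
          exact hc
        · have hg0 : (fun j : ℕ => f (i + 2 + (j : ZMod ℓ))) 0 = f (i + 2) := by norm_num
          have hgn : (fun j : ℕ => f (i + 2 + (j : ZMod ℓ))) (ℓ-1) = f (i + 1) := by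
            show f _ = _
            rw [hl1']
            congr 1
            ring
          beta_reduce at hg0 hgn
          rw [hg0, hgn]
          refine hf _ _ (Or.inr ⟨?_, by ring⟩)
          rw [hoi1v, hc]
          rfl
      | false =>
        refine no_short_block hk (n := ℓ - 1) (by omega) (by omega)
          (fun j : ℕ => f (i + 1 - (j : ZMod ℓ))) ?_ ?_ ?_
        · intro j1 j2 hj1 hj2 hg
          have hz := hfinj hg
          have hz' : (j1 : ZMod ℓ) = (j2 : ZMod ℓ) := by linear_combination -hz
          have := congrArg ZMod.val hz'
          rwa [ZMod.val_cast_of_lt (by omega), ZMod.val_cast_of_lt (by omega)] at this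
        · intro j hj
          show AugmentedRel m k (f (i + 1 - (j : ZMod ℓ))) (f (i + 1 - ((j+1 : ℕ) : ZMod ℓ)))
          have harg : (i + 1 - ((j+1 : ℕ) : ZMod ℓ)) = (i - (j : ZMod ℓ)) := by
            push_cast; ring
          rw [harg]
          refine hf _ _ (Or.inr ⟨?_, by ring⟩)
          have hne : (i - (j : ZMod ℓ)) ≠ i + 1 := by
            intro h
            have h' : i + (-(j : ZMod ℓ)) = i + 1 := by rw [← h]; ring
            have h0 := add_left_cancel h'
            apply hzero (j+1) (by omega) (by omega)
            push_cast
            linear_combination -h0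
          rw [hmaj' _ hne]
          exact hc
        · have hg0 : (fun j : ℕ => f (i + 1 - (j : ZMod ℓ))) 0 = f (i + 1) := by norm_num
          have hgn : (fun j : ℕ => f (i + 1 - (j : ZMod ℓ))) (ℓ-1) = f (i + 2) := by
            show f _ = _
            rw [hl1']
            congr 1
            ring
          beta_reduce at hg0 hgn
          rw [hg0, hgn]
          refine hf _ _ (Or.inl ⟨?_, by ring⟩)
          rw [hoi1v, hc]
          rfl
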